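/- Let the one-step method (Ψ_{i,k}) be stochastically C-stable with constants C₀ ≥ 0 and η > 1, let ξ : Ω → (ℝ^d)^N be ℱ_0-measurable and square-integrable, and let X̂ be the discretization generated by the method from ξ, i.e. X̂_0 = ξ and X̂_{k+1,i} = Ψ_{i,k}(X̂_{k,i}, X̂_k, ·). Let X_0, …, X_M : Ω → (ℝ^d)^N be square-integrable with X_k ℱ_k-measurable for each k. Then there exists a constant C > 0 depending only on C₀ such that, writing C_η = 1 + (η − 1)^{−1} and E_{k,i} = X_{k,i} − Ψ_{i,k−1}(X_{k−1,i}, X_{k−1}, ·), one has: max_{0 ≤ n ≤ M} max_{1 ≤ i ≤ N} 𝔼[|X_{n,i} − X̂_{n,i}|²] ≤ e^{C T} ( max_{1 ≤ i ≤ N} 𝔼[|X_{0,i} − ξ_i|²] + ∑_{k=1}^{M} max_{1 ≤ i ≤ N} [ (1 + h^{−1}) 𝔼[|𝔼[E_{k,i} | ℱ_{k−1}]|²] + C_η 𝔼[|E_{k,i} − 𝔼[E_{k,i} | ℱ_{k−1}]|²] ] ). -/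

import Mathlib

open scoped RealInnerProductSpace BigOperators MeasureTheory
open MeasureTheory

set_option linter.unusedSectionVars false
set_option linter.unusedVariables false
open scoped ENNReal

section Helpers

variable {α : Type*} {m m0 : MeasurableSpace α} {μ : Measure α}
variable {E : Type*} [NormedAddCommGroup E] [InnerProductSpace ℝ E] [CompleteSpace E]

lemma memLp2_integrable_norm_sq {f : α → E} (hf : MemLp f 2 μ) :
    Integrable (fun a => ‖f a‖ ^ 2) μ := by
  have h := MeasureTheory.L2.integrable_inner (𝕜 := ℝ) (hf.toLp f) (hf.toLp f)
  refine h.congr ?_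
  filter_upwards [hf.coeFn_toLp] with a ha
  rw [ha, real_inner_self_eq_norm_sq]

lemma aux_condExpL2_ae_eq (hm : m ≤ m0) [SigmaFinite (μ.trim hm)] [IsFiniteMeasure μ]
    {f : α → E} (hf : MemLp f 2 μ) :
    (condExpL2 E ℝ hm (hf.toLp f) : α → E) =ᵐ[μ] μ[f|m] := by
  refine ae_eq_condExp_of_forall_setIntegral_eq hm (hf.integrable one_le_two)
    (fun s hs hμs => integrableOn_condExpL2_of_measure_ne_top hm hμs.ne _)
    (fun s hs hμs => ?_) (lpMeas.aestronglyMeasurable _)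
  rw [integral_condExpL2_eq hm (hf.toLp f) hs hμs.ne]
  exact setIntegral_congr_ae (hm s hs) (hf.coeFn_toLp.mono fun x hx _ => hx)

lemma memLp_condexp2 (hm : m ≤ m0) [SigmaFinite (μ.trim hm)] [IsFiniteMeasure μ]
    {f : α → E} (hf : MemLp f 2 μ) : MemLp (μ[f|m]) 2 μ :=
  (MeasureTheory.Lp.memLp _).ae_eq (aux_condExpL2_ae_eq hm hf)

lemma lp_norm_sq_eq_integral (G : Lp E 2 μ) : ‖G‖ ^ 2 = ∫ a, ‖G a‖ ^ 2 ∂μ := by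
  rw [← real_inner_self_eq_norm_sq G, MeasureTheory.L2.inner_def]
  exact integral_congr_ae (Filter.Eventually.of_forall fun a =>
    real_inner_self_eq_norm_sq _)

/-- Pythagoras for the conditional expectation in `L²`. -/
lemma integral_norm_sq_condexp_pyth (hm : m ≤ m0) [SigmaFinite (μ.trim hm)]
    [IsProbabilityMeasure μ] {f : α → E} (hf : MemLp f 2 μ) :
    ∫ a, ‖f a‖ ^ 2 ∂μ
      = (∫ a, ‖(μ[f|m]) a‖ ^ 2 ∂μ) + ∫ a, ‖f a - (μ[f|m]) a‖ ^ 2 ∂μ := by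
  set F : Lp E 2 μ := hf.toLp f with hF
  set P : Lp E 2 μ := (condExpL2 E ℝ hm F : Lp E 2 μ) with hP
  have hPm : AEStronglyMeasurable[m] (P : α → E) μ := lpMeas.aestronglyMeasurable _
  have horth : inner (𝕜 := ℝ) (F - P) P = 0 := by
    rw [inner_sub_left, sub_eq_zero, hP]
    exact (inner_condExpL2_eq_inner_fun (𝕜 := ℝ) hm F P hPm).symm
  have hnorm : ‖F‖ ^ 2 = ‖P‖ ^ 2 + ‖F - P‖ ^ 2 := by
    have hFPP : F = P + (F - P) := by abel
    calc ‖F‖ ^ 2 = ‖P + (F - P)‖ ^ 2 := by rw [← hFPP]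
      _ = ‖P‖ ^ 2 + 2 * inner ℝ P (F - P) + ‖F - P‖ ^ 2 := norm_add_sq_real P (F - P)
      _ = ‖P‖ ^ 2 + ‖F - P‖ ^ 2 := by
          rw [real_inner_comm, horth]; ring
  have h1 : ∫ a, ‖f a‖ ^ 2 ∂μ = ‖F‖ ^ 2 := by
    rw [lp_norm_sq_eq_integral]
    refine integral_congr_ae ?_
    filter_upwards [hf.coeFn_toLp] with a ha using by rw [ha]
  have hPce : (P : α → E) =ᵐ[μ] μ[f|m] := aux_condExpL2_ae_eq hm hf
  have h2 : ∫ a, ‖(μ[f|m]) a‖ ^ 2 ∂μ = ‖P‖ ^ 2 := by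
    rw [lp_norm_sq_eq_integral]
    refine integral_congr_ae ?_
    filter_upwards [hPce] with a ha using by rw [ha]
  have h3 : ∫ a, ‖f a - (μ[f|m]) a‖ ^ 2 ∂μ = ‖F - P‖ ^ 2 := by
    rw [lp_norm_sq_eq_integral]
    refine integral_congr_ae ?_
    filter_upwards [hf.coeFn_toLp, hPce, MeasureTheory.Lp.coeFn_sub F P] with a ha hb hc
    rw [hc, Pi.sub_apply, ha, hb]
  rw [h1, h2, h3, hnorm]

/-- weighted Young inequality in `L²`. -/
lemma young_l2 {ρ : ℝ} (hρ : 0 < ρ) {f g : α → E} (hf : MemLp f 2 μ) (hg : MemLp g 2 μ) :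
    ∫ a, ‖f a + g a‖ ^ 2 ∂μ
      ≤ (1 + ρ) * ∫ a, ‖f a‖ ^ 2 ∂μ + (1 + ρ⁻¹) * ∫ a, ‖g a‖ ^ 2 ∂μ := by
  have h1 : Integrable (fun a => ‖f a + g a‖ ^ 2) μ := by
    have := memLp2_integrable_norm_sq (hf.add hg)
    simpa using this
  have h2 := memLp2_integrable_norm_sq hf
  have h3 := memLp2_integrable_norm_sq hg
  have hpt : ∀ a, ‖f a + g a‖ ^ 2 ≤ (1 + ρ) * ‖f a‖ ^ 2 + (1 + ρ⁻¹) * ‖g a‖ ^ 2 := by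
    intro a
    set A := ‖f a‖ with hA
    set B := ‖g a‖ with hB
    have hAB : ‖f a + g a‖ ≤ A + B := norm_add_le _ _
    have hA0 : 0 ≤ A := norm_nonneg _
    have hB0 : 0 ≤ B := norm_nonneg _
    have hsq : ‖f a + g a‖ ^ 2 ≤ (A + B) ^ 2 := by
      apply pow_le_pow_left₀ (norm_nonneg _) hAB
    have hinv : ρ * ρ⁻¹ = 1 := mul_inv_cancel₀ hρ.ne'
    have hkey : 2 * A * B ≤ ρ * A ^ 2 + ρ⁻¹ * B ^ 2 := by
      have h0 : 0 ≤ (ρ * A - B) ^ 2 := sq_nonneg _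
      have hρinv : 0 < ρ⁻¹ := inv_pos.mpr hρ
      nlinarith [sq_nonneg (ρ * A - B), mul_pos hρ hρinv]
    nlinarith
  calc ∫ a, ‖f a + g a‖ ^ 2 ∂μ
      ≤ ∫ a, ((1 + ρ) * ‖f a‖ ^ 2 + (1 + ρ⁻¹) * ‖g a‖ ^ 2) ∂μ := by
        refine integral_mono h1 ?_ hpt
        exact (h2.const_mul _).add (h3.const_mul _)
    _ = (1 + ρ) * ∫ a, ‖f a‖ ^ 2 ∂μ + (1 + ρ⁻¹) * ∫ a, ‖g a‖ ^ 2 ∂μ := by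
        rw [integral_add (h2.const_mul _) (h3.const_mul _), integral_const_mul,
          integral_const_mul]

lemma memℒp_pi_of_components {ι : Type*} [Fintype ι] {f : α → ι → E}
    (hmeas : AEStronglyMeasurable f μ) (h : ∀ i, MemLp (fun a => f a i) 2 μ) :
    MemLp f 2 μ := by
  have hg : MemLp (fun a => ∑ i, ‖f a i‖) 2 μ := by
    have := memLp_finset_sum (μ := μ) (p := 2) Finset.univ
      (f := fun i a => ‖f a i‖) (fun i _ => (h i).norm)
    simpa using this
  refine hg.of_le hmeas ?_
  refine Filter.Eventually.of_forall fun a => ?_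
  have hsum0 : 0 ≤ ∑ i, ‖f a i‖ := Finset.sum_nonneg fun i _ => norm_nonneg _
  rw [Real.norm_eq_abs, abs_of_nonneg hsum0]
  rw [pi_norm_le_iff_of_nonneg hsum0]
  intro i
  exact Finset.single_le_sum (fun j _ => norm_nonneg _) (Finset.mem_univ i)

lemma step_bound (hm : m ≤ m0) [IsProbabilityMeasure μ] [SigmaFinite (μ.trim hm)]
    {Y Ef Df : α → E} (hY : ∀ a, Y a = Ef a + Df a)
    (hE2 : MemLp Ef 2 μ) (hD2 : MemLp Df 2 μ) {h η : ℝ} (hh : 0 < h) (hη : 1 < η) :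
    ∫ a, ‖Y a‖ ^ 2 ∂μ
      ≤ ((1 + h⁻¹) * ∫ a, ‖(μ[Ef|m]) a‖ ^ 2 ∂μ
          + (1 + (η - 1)⁻¹) * ∫ a, ‖Ef a - (μ[Ef|m]) a‖ ^ 2 ∂μ)
        + (1 + h) * ((∫ a, ‖(μ[Df|m]) a‖ ^ 2 ∂μ)
          + η * ∫ a, ‖Df a - (μ[Df|m]) a‖ ^ 2 ∂μ) := by
  have hYae : Y =ᵐ[μ] Ef + Df := Filter.Eventually.of_forall fun a => hY a
  have hY2 : MemLp Y 2 μ := (hE2.add hD2).ae_eq hYae.symm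
  have pyth := integral_norm_sq_condexp_pyth hm hY2
  have hcea : μ[Y|m] =ᵐ[μ] μ[Ef|m] + μ[Df|m] :=
    (condExp_congr_ae hYae).trans
      (condExp_add (hE2.integrable one_le_two) (hD2.integrable one_le_two) m)
  have hEce2 : MemLp (μ[Ef|m]) 2 μ := memLp_condexp2 hm hE2
  have hDce2 : MemLp (μ[Df|m]) 2 μ := memLp_condexp2 hm hD2
  have t1 : ∫ a, ‖(μ[Y|m]) a‖ ^ 2 ∂μ
      ≤ (1 + h⁻¹) * ∫ a, ‖(μ[Ef|m]) a‖ ^ 2 ∂μ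
        + (1 + h) * ∫ a, ‖(μ[Df|m]) a‖ ^ 2 ∂μ := by
    have heq : ∫ a, ‖(μ[Y|m]) a‖ ^ 2 ∂μ
        = ∫ a, ‖(μ[Ef|m]) a + (μ[Df|m]) a‖ ^ 2 ∂μ :=
      by refine integral_congr_ae ?_
         filter_upwards [hcea] with a ha
         rw [ha, Pi.add_apply]
    rw [heq]
    simpa [inv_inv] using young_l2 (inv_pos.mpr hh) hEce2 hDce2
  have t2 : ∫ a, ‖Y a - (μ[Y|m]) a‖ ^ 2 ∂μ
      ≤ (1 + (η - 1)⁻¹) * ∫ a, ‖Ef a - (μ[Ef|m]) a‖ ^ 2 ∂μ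
        + η * ∫ a, ‖Df a - (μ[Df|m]) a‖ ^ 2 ∂μ := by
    have hρ : 0 < η - 1 := by linarith
    have heq : ∫ a, ‖Y a - (μ[Y|m]) a‖ ^ 2 ∂μ
        = ∫ a, ‖(Ef a - (μ[Ef|m]) a) + (Df a - (μ[Df|m]) a)‖ ^ 2 ∂μ := by
      refine integral_congr_ae ?_
      filter_upwards [hcea] with a ha
      rw [hY a, ha, Pi.add_apply]
      congr 1
      abel
    rw [heq]
    have hy := young_l2 (inv_pos.mpr hρ) (hE2.sub hEce2) (hD2.sub hDce2)
    rw [inv_inv] at hy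
    have hee : (1 : ℝ) + (η - 1) = η := by ring
    rw [hee] at hy
    exact hy
  have hI1 : 0 ≤ ∫ a, ‖(μ[Df|m]) a‖ ^ 2 ∂μ := integral_nonneg fun a => by positivity
  have hI2 : 0 ≤ ∫ a, ‖Df a - (μ[Df|m]) a‖ ^ 2 ∂μ := integral_nonneg fun a => by positivity
  rw [pyth]
  nlinarith [mul_nonneg (mul_nonneg hh.le (by linarith : (0:ℝ) ≤ η)) hI2]

end Helpers


set_option maxHeartbeats 2000000 in
/-- Global error bound for stochastically C-stable one-step methods
for the particle system. `d` is the state dimension, `T > 0` the terminal time,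
`C₀ ≥ 0, η > 1` the C-stability constants. The constant `C` depends only on `C₀`
(in particular it is independent of `N`, `M`, `h = T/M`, the method and the processes). -/
theorem c_stable_global_error_bound
    {Ω : Type} [MeasurableSpace Ω] (ℙ : Measure Ω) [IsProbabilityMeasure ℙ]
    (d : ℕ) (hd : 1 ≤ d) (T : ℝ) (hT : 0 < T)
    (C₀ : ℝ) (hC₀ : 0 ≤ C₀) (η : ℝ) (hη : 1 < η) :
    ∃ C : ℝ, 0 < C ∧
      ∀ (N M : ℕ), 1 ≤ N → 1 ≤ M →
      ∀ h : ℝ, h = T / M →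
      -- the filtration
      ∀ ℱ : ℕ → MeasurableSpace Ω, (∀ k, k < M → ℱ k ≤ ℱ (k + 1)) →
        (∀ k, k ≤ M → ℱ k ≤ ‹MeasurableSpace Ω›) →
      -- the one-step method
      ∀ Ψ : Fin N → ℕ → EuclideanSpace ℝ (Fin d) →
          (Fin N → EuclideanSpace ℝ (Fin d)) → Ω → EuclideanSpace ℝ (Fin d),
        -- measurability of the one-step map
        (∀ (i : Fin N) (k : ℕ), k < M →
          Measurable[MeasurableSpace.prod inferInstance (ℱ (k + 1))]
            (fun q : (EuclideanSpace ℝ (Fin d) × (Fin N → EuclideanSpace ℝ (Fin d))) × Ω =>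
              Ψ i k q.1.1 q.1.2 q.2)) →
        -- square integrability of the one-step map
        (∀ (i : Fin N) (k : ℕ), k < M →
          ∀ Z : Ω → Fin N → EuclideanSpace ℝ (Fin d),
            Measurable[ℱ k] Z → MemLp Z 2 ℙ →
            MemLp (fun ω => Ψ i k (Z ω i) (Z ω) ω) 2 ℙ) →
        -- stochastic C-stability with constants C₀ and η
        (∀ (k : ℕ), k < M → ∀ i : Fin N,
          ∀ P Q : Ω → Fin N → EuclideanSpace ℝ (Fin d),
            Measurable[ℱ k] P → Measurable[ℱ k] Q → MemLp P 2 ℙ → MemLp Q 2 ℙ →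
            (∫ ω, ‖(ℙ[(fun ω' => Ψ i k (P ω' i) (P ω') ω' - Ψ i k (Q ω' i) (Q ω') ω') |
                ℱ k]) ω‖ ^ 2 ∂ℙ)
              + η * ∫ ω, ‖(Ψ i k (P ω i) (P ω) ω - Ψ i k (Q ω i) (Q ω) ω)
                  - (ℙ[(fun ω' => Ψ i k (P ω' i) (P ω') ω' - Ψ i k (Q ω' i) (Q ω') ω') |
                      ℱ k]) ω‖ ^ 2 ∂ℙ
            ≤ (1 + C₀ * h) * (∫ ω, ‖P ω i - Q ω i‖ ^ 2 ∂ℙ)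
              + C₀ * h * ((N : ℝ)⁻¹ * ∑ j, ∫ ω, ‖P ω j - Q ω j‖ ^ 2 ∂ℙ)) →
      -- the initial condition
      ∀ ξ : Ω → Fin N → EuclideanSpace ℝ (Fin d), Measurable[ℱ 0] ξ → MemLp ξ 2 ℙ →
      -- the discretization generated by the method
      ∀ Xh : ℕ → Ω → Fin N → EuclideanSpace ℝ (Fin d), Xh 0 = ξ →
        (∀ (k : ℕ), k < M → ∀ (ω : Ω) (i : Fin N),
          Xh (k + 1) ω i = Ψ i k (Xh k ω i) (Xh k ω) ω) →
      -- the reference adapted square-integrable process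
      ∀ X : ℕ → Ω → Fin N → EuclideanSpace ℝ (Fin d),
        (∀ k, k ≤ M → Measurable[ℱ k] (X k)) → (∀ k, k ≤ M → MemLp (X k) 2 ℙ) →
      -- conclusion
      ∀ n, n ≤ M → ∀ i : Fin N,
        ∫ ω, ‖X n ω i - Xh n ω i‖ ^ 2 ∂ℙ
          ≤ Real.exp (C * T) *
            ((⨆ i' : Fin N, ∫ ω, ‖X 0 ω i' - ξ ω i'‖ ^ 2 ∂ℙ)
              + ∑ k ∈ Finset.Icc 1 M, ⨆ i' : Fin N,
                ((1 + h⁻¹) * ∫ ω, ‖(ℙ[(fun ω' =>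
                      X k ω' i' - Ψ i' (k - 1) (X (k - 1) ω' i') (X (k - 1) ω') ω') |
                    ℱ (k - 1)]) ω‖ ^ 2 ∂ℙ
                  + (1 + (η - 1)⁻¹) *
                    ∫ ω, ‖(X k ω i' - Ψ i' (k - 1) (X (k - 1) ω i') (X (k - 1) ω) ω)
                      - (ℙ[(fun ω' =>
                            X k ω' i' - Ψ i' (k - 1) (X (k - 1) ω' i') (X (k - 1) ω') ω') |
                          ℱ (k - 1)]) ω‖ ^ 2 ∂ℙ)) := by
  refine ⟨1 + 2 * C₀ + 2 * C₀ * T, by positivity, ?_⟩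
  set C : ℝ := 1 + 2 * C₀ + 2 * C₀ * T with hCdef
  intro N M hN hM h hh ℱ hmono hle Ψ hΨmeas hΨint hstab ξ hξmeas hξL2 Xh hXh0 hXhrec
    X hXmeas hXL2 n hn i
  subst hXh0
  haveI : Nonempty (Fin N) := ⟨⟨0, hN⟩⟩
  have hM0 : (0:ℝ) < (M:ℝ) := by exact_mod_cast hM
  have hh0 : 0 < h := by rw [hh]; positivity
  have hhT : h ≤ T := by
    rw [hh]
    calc T / (M:ℝ) ≤ T / 1 := by
          apply div_le_div_of_nonneg_left hT.le one_pos
          exact_mod_cast hM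
      _ = T := by ring
  have hMh : (M:ℝ) * h = T := by rw [hh]; field_simp
  -- properties of the discretization
  have hcompL2 : ∀ (f : Ω → Fin N → EuclideanSpace ℝ (Fin d)), MemLp f 2 ℙ →
      ∀ j : Fin N, MemLp (fun ω => f ω j) 2 ℙ := by
    intro f hf j
    exact (ContinuousLinearMap.proj (R := ℝ)
      (φ := fun _ : Fin N => EuclideanSpace ℝ (Fin d)) j).comp_memLp' hf
  have hXhP : ∀ k, k ≤ M → Measurable[ℱ k] (Xh k) ∧ MemLp (Xh k) 2 ℙ := by
    intro k
    induction k with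
    | zero => intro _; exact ⟨hξmeas, hξL2⟩
    | succ k ih =>
      intro hk1
      have hk : k < M := hk1
      have ihk := ih hk.le
      have hcomp : ∀ j : Fin N,
          Measurable[ℱ (k+1)] (fun ω => Ψ j k (Xh k ω j) (Xh k ω) ω) := by
        intro j
        have hXhm : Measurable[ℱ (k+1)] (Xh k) := ihk.1.mono (hmono k hk) le_rfl
        have hG : @Measurable Ω
            ((EuclideanSpace ℝ (Fin d) × (Fin N → EuclideanSpace ℝ (Fin d))) × Ω)
            (ℱ (k+1)) (MeasurableSpace.prod inferInstance (ℱ (k+1)))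
            (fun ω => ((Xh k ω j, Xh k ω), ω)) := by
          letI : MeasurableSpace Ω := ℱ (k+1)
          exact (((measurable_pi_apply j).comp hXhm).prodMk hXhm).prodMk measurable_id
        exact (hΨmeas j k hk).comp hG
      have heq : ∀ j : Fin N,
          (fun ω => Xh (k+1) ω j) = fun ω => Ψ j k (Xh k ω j) (Xh k ω) ω :=
        fun j => funext fun ω => hXhrec k hk ω j
      have hmeaspi : Measurable[ℱ (k+1)] (Xh (k+1)) := by
        letI : MeasurableSpace Ω := ℱ (k+1)
        rw [measurable_pi_iff]
        intro j
        rw [heq j]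
        exact hcomp j
      refine ⟨hmeaspi, ?_⟩
      refine memℒp_pi_of_components
        ((hmeaspi.mono (hle (k+1) hk1) le_rfl)).aestronglyMeasurable ?_
      intro j
      rw [heq j]
      exact hΨint j k hk (Xh k) ihk.1 ihk.2
  -- abbreviations (folded into the goal)
  set tt : ℕ → ℝ := fun k => ⨆ i' : Fin N,
      ((1 + h⁻¹) * ∫ ω, ‖(ℙ[(fun ω' =>
            X k ω' i' - Ψ i' (k - 1) (X (k - 1) ω' i') (X (k - 1) ω') ω') |
          ℱ (k - 1)]) ω‖ ^ 2 ∂ℙ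
        + (1 + (η - 1)⁻¹) *
          ∫ ω, ‖(X k ω i' - Ψ i' (k - 1) (X (k - 1) ω i') (X (k - 1) ω) ω)
            - (ℙ[(fun ω' =>
                  X k ω' i' - Ψ i' (k - 1) (X (k - 1) ω' i') (X (k - 1) ω') ω') |
                ℱ (k - 1)]) ω‖ ^ 2 ∂ℙ) with httdef
  set S : ℕ → ℝ := fun k => ⨆ j : Fin N, ∫ ω, ‖X k ω j - Xh k ω j‖ ^ 2 ∂ℙ with hSdef
  have he_nonneg : ∀ k (j : Fin N), 0 ≤ ∫ ω, ‖X k ω j - Xh k ω j‖ ^ 2 ∂ℙ :=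
    fun k j => integral_nonneg fun ω => by positivity
  have hS_nonneg : ∀ k, 0 ≤ S k := fun k => by
    rw [hSdef]; exact Real.iSup_nonneg (he_nonneg k)
  have hSapp : ∀ k, S k = ⨆ j : Fin N, ∫ ω, ‖X k ω j - Xh k ω j‖ ^ 2 ∂ℙ :=
    fun k => by rw [hSdef]
  have he_le_S : ∀ k (j : Fin N), (∫ ω, ‖X k ω j - Xh k ω j‖ ^ 2 ∂ℙ) ≤ S k :=
    fun k j => by
      rw [hSapp k]
      exact le_ciSup (f := fun j : Fin N => ∫ ω, ‖X k ω j - Xh k ω j‖ ^ 2 ∂ℙ)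
        (Set.finite_range _).bddAbove j
  have htt_nonneg : ∀ k, 0 ≤ tt k := by
    intro k
    refine Real.iSup_nonneg fun i' => ?_
    have h1 : (0:ℝ) ≤ 1 + h⁻¹ := by positivity
    have h2 : (0:ℝ) ≤ 1 + (η - 1)⁻¹ := by
      have : (0:ℝ) ≤ (η - 1)⁻¹ := by
        apply inv_nonneg.mpr; linarith
      linarith
    refine add_nonneg (mul_nonneg h1 (integral_nonneg fun ω => by positivity))
      (mul_nonneg h2 (integral_nonneg fun ω => by positivity))
  -- the one-step recursion
  have key : ∀ k, k < M → ∀ j : Fin N,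
      (∫ ω, ‖X (k+1) ω j - Xh (k+1) ω j‖ ^ 2 ∂ℙ)
        ≤ tt (k+1) + (1 + h) * ((1 + C₀ * h) * (∫ ω, ‖X k ω j - Xh k ω j‖ ^ 2 ∂ℙ)
            + C₀ * h * ((N : ℝ)⁻¹ * ∑ j', ∫ ω, ‖X k ω j' - Xh k ω j'‖ ^ 2 ∂ℙ)) := by
    intro k hk j
    have hm : ℱ k ≤ ‹MeasurableSpace Ω› := hle k hk.le
    haveI := isFiniteMeasure_trim (μ := ℙ) hm
    have hmem_psiX : MemLp (fun ω => Ψ j k (X k ω j) (X k ω) ω) 2 ℙ :=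
      hΨint j k hk (X k) (hXmeas k hk.le) (hXL2 k hk.le)
    have hmem_psiXh : MemLp (fun ω => Ψ j k (Xh k ω j) (Xh k ω) ω) 2 ℙ :=
      hΨint j k hk (Xh k) (hXhP k hk.le).1 (hXhP k hk.le).2
    have hmemXc : MemLp (fun ω => X (k+1) ω j) 2 ℙ := hcompL2 _ (hXL2 (k+1) hk) j
    have hmemXhc : MemLp (fun ω => Xh (k+1) ω j) 2 ℙ := hcompL2 _ (hXhP (k+1) hk).2 j
    have hE2 : MemLp (fun ω => X (k+1) ω j - Ψ j k (X k ω j) (X k ω) ω) 2 ℙ :=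
      hmemXc.sub hmem_psiX
    have hD2 : MemLp
        (fun ω => Ψ j k (X k ω j) (X k ω) ω - Ψ j k (Xh k ω j) (Xh k ω) ω) 2 ℙ :=
      hmem_psiX.sub hmem_psiXh
    have hYptw : ∀ ω, X (k+1) ω j - Xh (k+1) ω j
        = (X (k+1) ω j - Ψ j k (X k ω j) (X k ω) ω)
          + (Ψ j k (X k ω j) (X k ω) ω - Ψ j k (Xh k ω j) (Xh k ω) ω) := by
      intro ω
      rw [hXhrec k hk ω j]
      abel
    have hsb :
        ∫ ω, ‖X (k+1) ω j - Xh (k+1) ω j‖ ^ 2 ∂ℙ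
          ≤ ((1 + h⁻¹) * ∫ ω, ‖(ℙ[(fun ω' =>
                X (k+1) ω' j - Ψ j k (X k ω' j) (X k ω') ω') | ℱ k]) ω‖ ^ 2 ∂ℙ
              + (1 + (η - 1)⁻¹) * ∫ ω, ‖(X (k+1) ω j - Ψ j k (X k ω j) (X k ω) ω)
                  - (ℙ[(fun ω' =>
                      X (k+1) ω' j - Ψ j k (X k ω' j) (X k ω') ω') | ℱ k]) ω‖ ^ 2 ∂ℙ)
            + (1 + h) * ((∫ ω, ‖(ℙ[(fun ω' =>
                  Ψ j k (X k ω' j) (X k ω') ω' - Ψ j k (Xh k ω' j) (Xh k ω') ω') |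
                    ℱ k]) ω‖ ^ 2 ∂ℙ)
              + η * ∫ ω, ‖(Ψ j k (X k ω j) (X k ω) ω - Ψ j k (Xh k ω j) (Xh k ω) ω)
                  - (ℙ[(fun ω' =>
                      Ψ j k (X k ω' j) (X k ω') ω' - Ψ j k (Xh k ω' j) (Xh k ω') ω') |
                        ℱ k]) ω‖ ^ 2 ∂ℙ) :=
      step_bound hm hYptw hE2 hD2 hh0 hη
    have hstabk := hstab k hk j (X k) (Xh k) (hXmeas k hk.le) (hXhP k hk.le).1
      (hXL2 k hk.le) (hXhP k hk.le).2
    have hloc : ((1 + h⁻¹) * ∫ ω, ‖(ℙ[(fun ω' =>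
            X (k+1) ω' j - Ψ j k (X k ω' j) (X k ω') ω') | ℱ k]) ω‖ ^ 2 ∂ℙ
          + (1 + (η - 1)⁻¹) * ∫ ω, ‖(X (k+1) ω j - Ψ j k (X k ω j) (X k ω) ω)
              - (ℙ[(fun ω' =>
                  X (k+1) ω' j - Ψ j k (X k ω' j) (X k ω') ω') | ℱ k]) ω‖ ^ 2 ∂ℙ)
        ≤ tt (k+1) := by
      exact le_ciSup (f := fun i' : Fin N =>
        ((1 + h⁻¹) * ∫ ω, ‖(ℙ[(fun ω' =>
              X (k+1) ω' i' - Ψ i' (k+1-1) (X (k+1-1) ω' i') (X (k+1-1) ω') ω') |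
            ℱ (k+1-1)]) ω‖ ^ 2 ∂ℙ
          + (1 + (η - 1)⁻¹) *
            ∫ ω, ‖(X (k+1) ω i' - Ψ i' (k+1-1) (X (k+1-1) ω i') (X (k+1-1) ω) ω)
              - (ℙ[(fun ω' =>
                    X (k+1) ω' i' - Ψ i' (k+1-1) (X (k+1-1) ω' i') (X (k+1-1) ω') ω') |
                  ℱ (k+1-1)]) ω‖ ^ 2 ∂ℙ)) (Set.finite_range _).bddAbove j
    have hDint1 : 0 ≤ ∫ ω, ‖(ℙ[(fun ω' =>
        Ψ j k (X k ω' j) (X k ω') ω' - Ψ j k (Xh k ω' j) (Xh k ω') ω') |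
          ℱ k]) ω‖ ^ 2 ∂ℙ := integral_nonneg fun ω => by positivity
    have hDint2 : 0 ≤ ∫ ω, ‖(Ψ j k (X k ω j) (X k ω) ω - Ψ j k (Xh k ω j) (Xh k ω) ω)
        - (ℙ[(fun ω' =>
            Ψ j k (X k ω' j) (X k ω') ω' - Ψ j k (Xh k ω' j) (Xh k ω') ω') |
              ℱ k]) ω‖ ^ 2 ∂ℙ := integral_nonneg fun ω => by positivity
    have hmul := mul_le_mul_of_nonneg_left hstabk (by linarith : (0:ℝ) ≤ 1 + h)
    linarith [mul_nonneg (mul_nonneg hh0.le (by linarith : (0:ℝ) ≤ η)) hDint2]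
  -- sup recursion
  set A : ℝ := (1 + h) * (1 + 2 * C₀ * h) with hAdef
  have hA1 : 1 ≤ A := by rw [hAdef]; nlinarith [mul_nonneg hC₀ hh0.le]
  have hstep : ∀ k, k < M → S (k+1) ≤ A * S k + tt (k+1) := by
    intro k hk
    rw [hSapp (k+1)]
    refine ciSup_le fun j => ?_
    have h1 := key k hk j
    have ha := he_le_S k j
    have hb : (N : ℝ)⁻¹ * ∑ j', ∫ ω, ‖X k ω j' - Xh k ω j'‖ ^ 2 ∂ℙ ≤ S k := by
      have hNpos : (0:ℝ) < (N:ℝ) := by exact_mod_cast hN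
      have hsum : ∑ j' : Fin N, ∫ ω, ‖X k ω j' - Xh k ω j'‖ ^ 2 ∂ℙ ≤ (N:ℝ) * S k := by
        calc ∑ j' : Fin N, ∫ ω, ‖X k ω j' - Xh k ω j'‖ ^ 2 ∂ℙ
            ≤ ∑ _j' : Fin N, S k := Finset.sum_le_sum fun j' _ => he_le_S k j'
          _ = (N:ℝ) * S k := by
              rw [Finset.sum_const, Finset.card_univ, Fintype.card_fin, nsmul_eq_mul]
      calc (N : ℝ)⁻¹ * ∑ j', ∫ ω, ‖X k ω j' - Xh k ω j'‖ ^ 2 ∂ℙ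
          ≤ (N : ℝ)⁻¹ * ((N:ℝ) * S k) := by
            apply mul_le_mul_of_nonneg_left hsum (inv_nonneg.mpr hNpos.le)
        _ = S k := by field_simp
    have hSk := hS_nonneg k
    have hc1 : (0:ℝ) ≤ (1 + h) * (1 + C₀ * h) := by nlinarith [mul_nonneg hC₀ hh0.le]
    have hc2 : (0:ℝ) ≤ (1 + h) * (C₀ * h) := by nlinarith [mul_nonneg hC₀ hh0.le]
    rw [hAdef]
    nlinarith [h1, mul_le_mul_of_nonneg_left ha hc1, mul_le_mul_of_nonneg_left hb hc2]
  -- discrete Gronwall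
  have glob : ∀ k, k ≤ M → S k ≤ A ^ k * (S 0 + ∑ k' ∈ Finset.Icc 1 k, tt k') := by
    intro k
    induction k with
    | zero => intro _; simp
    | succ k ih =>
      intro hk1
      have hk : k < M := hk1
      have ihk := ih hk.le
      have hA0 : (0:ℝ) ≤ A := by linarith
      have hApow1 : (1:ℝ) ≤ A ^ (k+1) := one_le_pow₀ hA1
      calc S (k+1) ≤ A * S k + tt (k+1) := hstep k hk
        _ ≤ A * (A ^ k * (S 0 + ∑ k' ∈ Finset.Icc 1 k, tt k')) + tt (k+1) := by
            have := mul_le_mul_of_nonneg_left ihk hA0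
            linarith
        _ ≤ A ^ (k+1) * (S 0 + ∑ k' ∈ Finset.Icc 1 (k+1), tt k') := by
            rw [Finset.sum_Icc_succ_top (by omega : 1 ≤ k + 1) tt]
            have h1 : A * (A ^ k * (S 0 + ∑ k' ∈ Finset.Icc 1 k, tt k'))
                = A ^ (k+1) * (S 0 + ∑ k' ∈ Finset.Icc 1 k, tt k') := by
              rw [pow_succ]; ring
            have h2 : tt (k+1) ≤ A ^ (k+1) * tt (k+1) :=
              le_mul_of_one_le_left (htt_nonneg (k+1)) hApow1
            have h3 : A ^ (k+1) * ((S 0 + ∑ k' ∈ Finset.Icc 1 k, tt k') + tt (k+1))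
                = A ^ (k+1) * (S 0 + ∑ k' ∈ Finset.Icc 1 k, tt k') + A ^ (k+1) * tt (k+1) := by
              ring
            linarith
  -- final assembly
  have hA0 : (0:ℝ) ≤ A := by linarith
  have hAle : A ≤ Real.exp (C * h) := by
    have h1 : A ≤ 1 + C * h := by
      rw [hAdef, hCdef]
      nlinarith [mul_le_mul_of_nonneg_left hhT (mul_nonneg hC₀ hh0.le),
        mul_nonneg hC₀ hh0.le]
    have h2 := Real.add_one_le_exp (C * h)
    linarith
  have hAM : A ^ M ≤ Real.exp (C * T) := by
    calc A ^ M ≤ (Real.exp (C * h)) ^ M := pow_le_pow_left₀ hA0 hAle M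
      _ = Real.exp ((M:ℝ) * (C * h)) := by rw [← Real.exp_nat_mul]
      _ = Real.exp (C * T) := by rw [← hMh]; ring_nf
  have hsum_nonneg : ∀ (m' : ℕ), 0 ≤ ∑ k' ∈ Finset.Icc 1 m', tt k' :=
    fun m' => Finset.sum_nonneg fun k _ => htt_nonneg k
  have hsum_mono : ∑ k' ∈ Finset.Icc 1 n, tt k' ≤ ∑ k' ∈ Finset.Icc 1 M, tt k' :=
    Finset.sum_le_sum_of_subset_of_nonneg (Finset.Icc_subset_Icc_right hn)
      fun k _ _ => htt_nonneg k
  have hB0 : 0 ≤ S 0 + ∑ k' ∈ Finset.Icc 1 M, tt k' :=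
    add_nonneg (hS_nonneg 0) (hsum_nonneg M)
  have hfinal : S n ≤ Real.exp (C * T) * (S 0 + ∑ k' ∈ Finset.Icc 1 M, tt k') := by
    calc S n ≤ A ^ n * (S 0 + ∑ k' ∈ Finset.Icc 1 n, tt k') := glob n hn
      _ ≤ A ^ M * (S 0 + ∑ k' ∈ Finset.Icc 1 M, tt k') := by
          have hp : A ^ n ≤ A ^ M := pow_le_pow_right₀ hA1 hn
          have hBn0 : 0 ≤ S 0 + ∑ k' ∈ Finset.Icc 1 n, tt k' :=
            add_nonneg (hS_nonneg 0) (hsum_nonneg n)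
          exact mul_le_mul hp (by linarith) hBn0 (pow_nonneg hA0 M)
      _ ≤ Real.exp (C * T) * (S 0 + ∑ k' ∈ Finset.Icc 1 M, tt k') :=
          mul_le_mul_of_nonneg_right hAM hB0
  refine le_trans (he_le_S n i) (le_trans hfinal (le_of_eq ?_))
  rw [hSapp 0]
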